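/- Fix c ∈ (0, 1) and α₀ > 0. There exist positive constants C₁, C₂ (depending only on c and α₀) such that for every real κ ≥ 1/(1 − c) and every real α with 0 < α ≤ α₀, setting γ = 1 − 1/κ and T = ln(1 + ln(1/γ)/α) / ln(1/γ), one has C₁ · (κ²/(κ + 1/α)) · ln(1 + 1/(κα)) ≤ γ^T + α κ T (1 − γ^T) ≤ C₂ · (κ²/(κ + 1/α)) · ln(1 + 1/(κα)). That is, with this choice of T the quantity γ^T + ακT(1 − γ^T) is Θ((κ²/(κ + 1/α)) ln(1 + 1/(κα))). -/

import Mathlib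

set_option maxHeartbeats 1000000


/-- **The uniform-schedule excess-risk bound is `Θ((κ²/(κ + 1/α)) ln(1 + 1/(κα)))`.**
Fix `c ∈ (0,1)` and `α₀ > 0`. There are positive constants `C₁, C₂` (depending only on `c`
and `α₀`) such that for all `κ ≥ 1/(1-c)` and `0 < α ≤ α₀`, with `γ = 1 - 1/κ` and
`T = ln(1 + ln(1/γ)/α)/ln(1/γ)` (a real number; `γ ^ T` is real exponentiation),
`C₁ (κ²/(κ + 1/α)) ln(1 + 1/(κα)) ≤ γ^T + ακT(1 - γ^T) ≤ C₂ (κ²/(κ + 1/α)) ln(1 + 1/(κα))`. -/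
theorem uniform_schedule_erub_theta_bound
    (c α₀ : ℝ) (hc0 : 0 < c) (hc1 : c < 1) (hα₀ : 0 < α₀) :
    ∃ C₁ C₂ : ℝ, 0 < C₁ ∧ 0 < C₂ ∧
      ∀ κ α : ℝ, 1 / (1 - c) ≤ κ → 0 < α → α ≤ α₀ →
        let γ : ℝ := 1 - 1 / κ
        let T : ℝ := Real.log (1 + Real.log (1 / γ) / α) / Real.log (1 / γ)
        C₁ * (κ ^ 2 / (κ + 1 / α)) * Real.log (1 + 1 / (κ * α))
            ≤ γ ^ T + α * κ * T * (1 - γ ^ T) ∧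
          γ ^ T + α * κ * T * (1 - γ ^ T)
            ≤ C₂ * (κ ^ 2 / (κ + 1 / α)) * Real.log (1 + 1 / (κ * α)) := by
  refine ⟨c, α₀ + 1 + 1/c, hc0, by positivity, ?_⟩
  intro κ α hκ hα hαα₀
  have h1c : 0 < 1 - c := by linarith
  have hκ1 : 1 ≤ κ := le_trans (by rw [le_div_iff₀ h1c]; nlinarith) hκ
  have hκ0 : 0 < κ := by linarith
  have hinvκ : 1/κ ≤ 1 - c := by
    rw [div_le_iff₀ h1c] at hκ
    rw [div_le_iff₀ hκ0]
    nlinarith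
  intro γ T
  have hγdef : γ = 1 - 1/κ := rfl
  have hγc : c ≤ γ := by rw [hγdef]; linarith
  have hγ0 : 0 < γ := lt_of_lt_of_le hc0 hγc
  have hγ1 : γ < 1 := by
    rw [hγdef]
    have : 0 < 1/κ := by positivity
    linarith
  set L : ℝ := Real.log (1/γ) with hLdef
  have hLneg : Real.log γ = -L := by rw [hLdef, one_div, Real.log_inv, neg_neg]
  have hL0 : 0 < L := Real.log_pos (one_lt_one_div hγ0 hγ1)
  have hLlb : 1/κ ≤ L := by
    have h := Real.log_le_sub_one_of_pos hγ0
    rw [hLneg, hγdef] at h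
    linarith
  have hLub : L ≤ 1/(c*κ) := by
    have h := Real.log_le_sub_one_of_pos (show (0:ℝ) < 1/γ by positivity)
    rw [← hLdef] at h
    have key : 1 ≤ γ * (1 + 1/(c*κ)) := by
      have e : c * (1/(c*κ)) = 1/κ := by field_simp
      have w0 : (0:ℝ) ≤ 1/(c*κ) := by positivity
      nlinarith [mul_nonneg (sub_nonneg.2 hγc) w0]
    have h2 : 1/γ ≤ 1 + 1/(c*κ) := by
      rw [div_le_iff₀ hγ0]
      nlinarith
    linarith
  set P : ℝ := 1 + L/α with hPdef
  have hP1 : 1 < P := by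
    have : 0 < L/α := by positivity
    rw [hPdef]; linarith
  have hP0 : (0:ℝ) < P := by linarith
  have hT : T = Real.log P / L := rfl
  have hlogγT : T * Real.log γ = -Real.log P := by
    rw [hT, hLneg]
    field_simp
  have hγT : γ ^ T = P⁻¹ := by
    rw [Real.rpow_def_of_pos hγ0, mul_comm, hlogγT, Real.exp_neg, Real.exp_log hP0]
  have hE : γ ^ T + α * κ * T * (1 - γ ^ T) = (1 + κ * Real.log P)/P := by
    rw [hγT, hT, hPdef]
    field_simp
    ring
  set Q : ℝ := 1 + 1/(κ*α) with hQdef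
  have hQ1 : 1 < Q := by
    have : 0 < 1/(κ*α) := by positivity
    rw [hQdef]; linarith
  have hQ0 : (0:ℝ) < Q := by linarith
  have hMeq : κ^2/(κ + 1/α) = κ/Q := by
    rw [hQdef]
    field_simp
  have hQP : Q ≤ P := by
    have h : (1/κ)/α ≤ L/α := by gcongr
    have e : 1/(κ*α) = (1/κ)/α := by rw [div_div]
    rw [hQdef, hPdef, e]
    linarith
  have hLα : L/α ≤ (1/(κ*α))/c := by
    have h1 : L/α ≤ (1/(c*κ))/α := by gcongr
    have h2 : (1/(c*κ))/α = (1/(κ*α))/c := by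
      field_simp
    linarith
  have hPQc : P ≤ Q/c := by
    have h3 : 1 ≤ 1/c := by rw [le_div_iff₀ hc0]; linarith
    rw [hPdef, hQdef, add_div]
    have : (1:ℝ)/c = 1/c := rfl
    have h4 : (1/(κ*α))/c = 1/(κ*α)/c := rfl
    linarith [hLα]
  have hlogQ0 : 0 < Real.log Q := Real.log_pos hQ1
  have hlogP0 : 0 < Real.log P := Real.log_pos hP1
  have hlogQP : Real.log Q ≤ Real.log P := Real.log_le_log hQ0 hQP
  have hc1' : 1 ≤ 1/c := by rw [le_div_iff₀ hc0]; linarith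
  have hlogP_le : Real.log P ≤ (1/c) * Real.log Q := by
    have hs : (0:ℝ) ≤ 1/(κ*α) := by positivity
    have hber : 1 + (1/c) * (1/(κ*α)) ≤ Q ^ ((1:ℝ)/c) := by
      have := one_add_mul_self_le_rpow_one_add (s := 1/(κ*α)) (by linarith) hc1'
      rw [← hQdef] at this
      exact this
    have hPle : P ≤ Q ^ ((1:ℝ)/c) := by
      refine le_trans ?_ hber
      have e : (1/(κ*α))/c = (1/c) * (1/(κ*α)) := by ring
      rw [hPdef]
      linarith [hLα]
    have h := Real.log_le_log hP0 hPle
    rwa [Real.log_rpow hQ0] at h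
  have hlogQ_lb : 1 - 1/Q ≤ Real.log Q := by
    have h := Real.log_le_sub_one_of_pos (show (0:ℝ) < 1/Q by positivity)
    rw [one_div, Real.log_inv] at h
    have : (1:ℝ)/Q = Q⁻¹ := one_div Q
    linarith
  have h1le : 1 ≤ (α₀+1) * (κ * Real.log Q) := by
    have hpos : (0:ℝ) < κ*α+1 := by positivity
    have e1 : 1 - 1/Q = 1/(κ*α+1) := by
      rw [hQdef]
      field_simp
      ring
    have e2 : 1 ≤ (α₀+1) * (κ * (1/(κ*α+1))) := by
      have er : (α₀+1) * (κ * (1/(κ*α+1))) = ((α₀+1)*κ)/(κ*α+1) := by ring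
      rw [er, le_div_iff₀ hpos]
      have hint : 0 ≤ κ * (α₀ - α) := mul_nonneg hκ0.le (sub_nonneg.2 hαα₀)
      nlinarith [hint]
    have e3 : (α₀+1) * (κ * (1 - 1/Q)) ≤ (α₀+1) * (κ * Real.log Q) :=
      mul_le_mul_of_nonneg_left (mul_le_mul_of_nonneg_left hlogQ_lb hκ0.le)
        (by linarith : (0:ℝ) ≤ α₀+1)
    rw [e1] at e3
    linarith
  constructor
  · rw [hE, hMeq]
    calc c * (κ/Q) * Real.log Q = (κ * Real.log Q)/(Q/c) := by
          rw [div_div_eq_mul_div]; ring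
      _ ≤ (κ * Real.log Q)/P := by gcongr
      _ ≤ (κ * Real.log P)/P := by gcongr
      _ ≤ (1 + κ * Real.log P)/P := by gcongr; linarith
  · rw [hE, hMeq]
    calc (1 + κ * Real.log P)/P ≤ (1 + κ * Real.log P)/Q := by
          gcongr
      _ ≤ ((α₀+1) * (κ * Real.log Q) + (1/c) * (κ * Real.log Q))/Q := by
          gcongr ?_/Q
          have h2 : κ * Real.log P ≤ (1/c) * (κ * Real.log Q) := by
            calc κ * Real.log P ≤ κ * ((1/c) * Real.log Q) := by gcongr
              _ = (1/c) * (κ * Real.log Q) := by ring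
          linarith
      _ = (α₀ + 1 + 1/c) * (κ/Q) * Real.log Q := by ring
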